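/- Let F : T → T' be a fully faithful exact functor of triangulated categories such that every object of T' is a direct summand of F(M) for some M ∈ T (a triangle equivalence up to direct summands). Then for every object M' of T', the object M' ⊕ M'[1] is isomorphic to F(M) for some M ∈ T. -/

import Mathlib

open CategoryTheory Limits Pretriangulated

universe v u

variable (C : Type u) [Category.{v} C] [Preadditive C] [HasZeroObject C]
  [HasShift C ℤ] [∀ n : ℤ, (shiftFunctor C n).Additive] [Pretriangulated C]

/-- A thick subcategory of a (pre)triangulated category, modelled as a set of objects
closed under isomorphisms, zero objects, shifts, extensions and direct summands. -/
structure ThickSubcat : Type (max u v) where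
  set : Set C
  mem_of_iso : ∀ {X Y : C}, (X ≅ Y) → X ∈ set → Y ∈ set
  zero_mem : ∀ Z : C, IsZero Z → Z ∈ set
  shift_mem : ∀ (X : C) (n : ℤ), X ∈ set → X⟦n⟧ ∈ set
  ext_mem : ∀ T : Triangle C, T ∈ (distTriang C) → T.obj₁ ∈ set → T.obj₃ ∈ set → T.obj₂ ∈ set
  summand_mem : ∀ (X Y : C) (i : Y ⟶ X) (r : X ⟶ Y), i ≫ r = 𝟙 Y → X ∈ set → Y ∈ set

lemma ThickSubcat.set_injective : Function.Injective (ThickSubcat.set (C := C)) := by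
  rintro ⟨s, _, _, _, _, _⟩ ⟨t, _, _, _, _, _⟩ h
  cases h; rfl

instance : PartialOrder (ThickSubcat C) :=
  PartialOrder.lift ThickSubcat.set (ThickSubcat.set_injective C)

/-- A thick subcategory `P` is *prime* if there is a unique minimal element among the
thick subcategories properly containing `P`. -/
def IsPrimeThick (P : ThickSubcat C) : Prop :=
  ∃! X : ThickSubcat C, Minimal (fun Y : ThickSubcat C => P < Y) X

/-- The spectrum: the set of prime thick subcategories. -/
def SpecTri := {P : ThickSubcat C // IsPrimeThick C P}

/-- The support of an object `M`. -/
def suppObj (M : C) : Set (SpecTri C) := {P | M ∉ P.1.set}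

/-- The topology on the spectrum, with closed basis the supports `suppObj M`. -/
instance : TopologicalSpace (SpecTri C) :=
  TopologicalSpace.generateFrom {U | ∃ M : C, U = (suppObj C M)ᶜ}

/-- Balmer's cofinality lemma: let `F : T → T'` be a fully faithful exact functor such
that every object of `T'` is a direct summand of `F(M)` for some `M ∈ T` (a triangle
equivalence up to direct summands). Then for every `M' ∈ T'`, the object `M' ⊕ M'[1]` is
isomorphic to `F(M)` for some `M ∈ T`. -/
theorem stmt10 (D : Type*) [Category D] [Preadditive D] [HasZeroObject D]
    [HasShift D ℤ] [∀ n : ℤ, (shiftFunctor D n).Additive] [Pretriangulated D]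
    [HasBinaryBiproducts D]
    (F : C ⥤ D) [F.CommShift ℤ] [F.IsTriangulated] [F.Additive] [F.Full] [F.Faithful]
    (hsummand : ∀ M' : D, ∃ (M : C) (i : M' ⟶ F.obj M) (r : F.obj M ⟶ M'), i ≫ r = 𝟙 M')
    (M' : D) :
    ∃ M : C, Nonempty ((M' ⊞ M'⟦(1 : ℤ)⟧) ≅ F.obj M) := by
  obtain ⟨M, i, r, hir⟩ := hsummand M'
  have hir' := reassoc_of% hir
  obtain ⟨φ, hφ⟩ := F.map_surjective (𝟙 (F.obj M) - (r ≫ i))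
  obtain ⟨N, g₀, δ₀, hT⟩ := Pretriangulated.distinguished_cocone_triangle φ
  set g : F.obj M ⟶ F.obj N := F.map g₀ with hgdef
  set δ : F.obj N ⟶ (F.obj M)⟦(1 : ℤ)⟧ :=
    F.map δ₀ ≫ (F.commShiftIso (1 : ℤ)).hom.app M with hδdef
  have hTD : Triangle.mk (F.map φ) g δ ∈ distTriang D := F.map_distinguished _ hT
  have hfg : F.map φ ≫ g = 0 := comp_distTriang_mor_zero₁₂ _ hTD
  have hgδ : g ≫ δ = 0 := comp_distTriang_mor_zero₂₃ _ hTD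
  have hgδ' := reassoc_of% hgδ
  have hδf : δ ≫ (F.map φ)⟦(1 : ℤ)⟧' = 0 := comp_distTriang_mor_zero₃₁ _ hTD
  -- obtain t : F.obj N ⟶ F.obj M with g ≫ t = r ≫ i
  have hfe : F.map φ ≫ ((r ≫ i : F.obj M ⟶ F.obj M)) = 0 := by
    rw [hφ]
    simp [hir', Preadditive.sub_comp]
  obtain ⟨t, ht0⟩ : ∃ t : F.obj N ⟶ F.obj M, r ≫ i = g ≫ t := Triangle.yoneda_exact₂ _ hTD (r ≫ i : F.obj M ⟶ F.obj M) hfe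
  have ht : r ≫ i = g ≫ t := ht0
  have ht' := reassoc_of% ht.symm
  -- obtain v : M'⟦1⟧ ⟶ F.obj N with v ≫ δ = i⟦1⟧'
  have hif : (i⟦(1 : ℤ)⟧' : M'⟦(1 : ℤ)⟧ ⟶ (F.obj M)⟦(1 : ℤ)⟧) ≫ (F.map φ)⟦(1 : ℤ)⟧' = 0 := by
    rw [← Functor.map_comp, hφ]
    simp [hir', Preadditive.comp_sub]
  obtain ⟨v, hv0⟩ : ∃ v : M'⟦(1 : ℤ)⟧ ⟶ F.obj N, i⟦(1 : ℤ)⟧' = v ≫ δ :=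
    Triangle.coyoneda_exact₁ _ hTD (i⟦(1 : ℤ)⟧') hif
  have hv : (i⟦(1 : ℤ)⟧' : M'⟦(1 : ℤ)⟧ ⟶ (F.obj M)⟦(1 : ℤ)⟧) = v ≫ δ := hv0
  set u : M' ⟶ F.obj N := i ≫ g with hu
  set p : F.obj N ⟶ M' := t ≫ r with hp
  set q : F.obj N ⟶ M'⟦(1 : ℤ)⟧ := δ ≫ r⟦(1 : ℤ)⟧' with hq
  have hup : u ≫ p = 𝟙 M' := by
    simp [hu, hp, ht', hir', hir]
  have huq : u ≫ q = 0 := by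
    simp [hu, hq, hgδ']
  have huδ : u ≫ δ = 0 := by
    simp [hu, hgδ]
  set v' : M'⟦(1 : ℤ)⟧ ⟶ F.obj N := v - v ≫ p ≫ u with hv'
  have hv'δ : v' ≫ δ = i⟦(1 : ℤ)⟧' := by
    simp [hv', Preadditive.sub_comp, ← hv, huδ]
  have hv'q : v' ≫ q = 𝟙 _ := by
    rw [hq, ← Category.assoc, hv'δ, ← Functor.map_comp, hir,
      CategoryTheory.Functor.map_id]
  have hv'p : v' ≫ p = 0 := by
    rw [hv', Preadditive.sub_comp, Category.assoc, Category.assoc, hup,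
      Category.comp_id, sub_self]
  set γ : F.obj N ⟶ F.obj N := 𝟙 (F.obj N) - p ≫ u - q ≫ v' with hγ
  have hγδ : γ ≫ δ = 0 := by
    have he' : (r ≫ i : F.obj M ⟶ F.obj M) = 𝟙 (F.obj M) - F.map φ := by
      rw [hφ]; abel
    simp only [hγ, Preadditive.sub_comp, Category.id_comp, Category.assoc, hv'δ,
      huδ, comp_zero, sub_zero, hq]
    rw [← Functor.map_comp, he', Functor.map_sub, CategoryTheory.Functor.map_id,
      Preadditive.comp_sub, Category.comp_id, hδf, sub_zero, sub_self]
  have hem : g = (r ≫ i) ≫ g := by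
    have h := hfg
    rw [hφ, Preadditive.sub_comp, Category.id_comp, sub_eq_zero] at h
    exact h
  have hgγ : g ≫ γ = 0 := by
    simp only [hγ, Preadditive.comp_sub, Category.comp_id, hq, hp, hu,
      Category.assoc, ht', hir', hgδ', zero_comp, comp_zero, sub_zero]
    rw [← Category.assoc, ← hem, sub_self]
  obtain ⟨s, hs0⟩ : ∃ s : F.obj N ⟶ F.obj M, γ = s ≫ g := Triangle.coyoneda_exact₃ _ hTD γ hγδ
  have hs : γ = s ≫ g := hs0
  have hγ2 : γ ≫ γ = 0 := by
    nth_rewrite 1 [hs]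
    rw [Category.assoc, hgγ, comp_zero]
  set α : (M' ⊞ M'⟦(1 : ℤ)⟧) ⟶ F.obj N := biprod.desc u v' with hα
  set β : F.obj N ⟶ (M' ⊞ M'⟦(1 : ℤ)⟧) := biprod.lift p q with hβ
  have h1 : α ≫ β = 𝟙 _ := by
    apply biprod.hom_ext'
    · apply biprod.hom_ext <;> simp [hα, hβ, hup, huq]
    · apply biprod.hom_ext <;> simp [hα, hβ, hv'p, hv'q]
  have h2 : β ≫ α = 𝟙 _ - γ := by
    rw [hα, hβ, biprod.lift_desc, hγ]
    abel
  have h3 : ((𝟙 _ + γ) ≫ β) ≫ α = 𝟙 _ := by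
    rw [Category.assoc, h2, Preadditive.comp_sub, Category.comp_id,
      Preadditive.add_comp, Category.id_comp, hγ2, add_zero]
    abel
  have hx : (𝟙 _ + γ) ≫ β = β := by
    have h := congrArg (fun z => z ≫ β) h3
    rw [Category.assoc, Category.assoc, h1, Category.comp_id, Category.id_comp] at h
    exact h
  have h5 : β ≫ α = 𝟙 _ := by
    rw [← hx]
    exact h3
  exact ⟨N, ⟨Iso.mk α β h1 h5⟩⟩
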